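/- arXiv:0811.3779 — 3 statements merged into one kernel-verified Lean document; each statement's English description precedes it below -/
import Mathlib

section
/- Let G=(V,E) be a finite simple undirected graph and let S ⊆ V be a set of vertices with μ(S) > 0. Let S₁ be obtained from S by one step of the evolving set process with uniform threshold U. Then the conditional expectation of μ(S₁) given U ≤ 1/2 equals μ(S) + ∂(S) = μ(S)(1 + φ(S)), and the conditional expectation of μ(S₁) given U > 1/2 equals μ(S) − ∂(S) = μ(S)(1 − φ(S)). -/
open scoped Classical symmDiff

noncomputable section

variable {V : Type*} [Fintype V] [DecidableEq V]

/-- The volume `μ(S)` of a set of vertices: the sum of the degrees. -/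
def vol (G : SimpleGraph V) [DecidableRel G.Adj] (S : Finset V) : ℝ :=
  ∑ x ∈ S, (G.degree x : ℝ)

/-- The number of edges leaving `S`, i.e. `∂(S) = e(S, Sᶜ)`. -/
def bdry (G : SimpleGraph V) [DecidableRel G.Adj] (S : Finset V) : ℝ :=
  ∑ x ∈ S, ((Sᶜ.filter (G.Adj x)).card : ℝ)

/-- The conductance `φ(S) = ∂(S)/μ(S)`. -/
def phiCond (G : SimpleGraph V) [DecidableRel G.Adj] (S : Finset V) : ℝ :=
  bdry G S / vol G S

/-- The lazy random walk kernel `p(x,y)`: `1/2` if `x = y`, `1/(2 d(x))` if `x ~ y`,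
and `0` otherwise. -/
def walkP (G : SimpleGraph V) [DecidableRel G.Adj] (x y : V) : ℝ :=
  if x = y then 1/2 else if G.Adj x y then 1 / (2 * (G.degree x : ℝ)) else 0

/-- `p(x,S) = Σ_{y∈S} p(x,y)`. -/
def pset (G : SimpleGraph V) [DecidableRel G.Adj] (x : V) (S : Finset V) : ℝ :=
  ∑ y ∈ S, walkP G x y

/-- One step of the evolving set process from `S` with threshold `u`:
`S₁ = {y : p(y,S) ≥ u}`. -/
def esStep (G : SimpleGraph V) [DecidableRel G.Adj] (S : Finset V) (u : ℝ) : Finset V :=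
  Finset.univ.filter fun y => u ≤ pset G y S

/-- The ESP transition kernel `K(S,S')`: the probability, for a uniform threshold
`U ∈ [0,1]`, that `{y : p(y,S) ≥ U} = S'`. -/
def Kk (G : SimpleGraph V) [DecidableRel G.Adj] (S S' : Finset V) : ℝ :=
  (MeasureTheory.volume {u : ℝ | u ∈ Set.Icc (0:ℝ) 1 ∧ esStep G S u = S'}).toReal

/-- The volume-biased ESP transition kernel `K̂(S,S') = (μ(S')/μ(S)) K(S,S')`. -/
def Khat (G : SimpleGraph V) [DecidableRel G.Adj] (S S' : Finset V) : ℝ :=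
  vol G S' / vol G S * Kk G S S'


lemma stepIntegrable (c d a b : ℝ) :
    IntervalIntegrable (fun u => if u ≤ c then d else 0) MeasureTheory.volume a b := by
  have h : (fun u => if u ≤ c then d else 0) = Set.indicator (Set.Iic c) (fun _ => d) := by
    funext u; simp [Set.indicator_apply, Set.mem_Iic]
  rw [h]
  constructor <;>
    exact (MeasureTheory.integrableOn_const
      measure_Ioc_lt_top.ne).indicator measurableSet_Iic

lemma stepInt (a b c d : ℝ) (hab : a ≤ b) :
    ∫ u in a..b, (if u ≤ c then d else 0) = d * max (min b c - a) 0 := by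
  have h : (fun u => if u ≤ c then d else 0) = Set.indicator (Set.Iic c) (fun _ => d) := by
    funext u; simp [Set.indicator_apply, Set.mem_Iic]
  rw [intervalIntegral.integral_of_le hab, h,
    MeasureTheory.integral_indicator measurableSet_Iic,
    MeasureTheory.Measure.restrict_restrict measurableSet_Iic]
  have hset : Set.Iic c ∩ Set.Ioc a b = Set.Ioc a (min b c) := by
    ext u
    simp only [Set.mem_inter_iff, Set.mem_Iic, Set.mem_Ioc, le_min_iff]
    tauto
  rw [hset, MeasureTheory.setIntegral_const, Real.volume_real_Ioc, smul_eq_mul]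
  ring

lemma deg_split (G : SimpleGraph V) [DecidableRel G.Adj] (S : Finset V) (x : V) :
    (G.degree x : ℝ) = ((S.filter (G.Adj x)).card : ℝ) + ((Sᶜ.filter (G.Adj x)).card : ℝ) := by
  have h1 : Finset.univ.filter (G.Adj x) = S.filter (G.Adj x) ∪ Sᶜ.filter (G.Adj x) := by
    rw [← Finset.filter_union, Finset.union_compl]
  have h2 : Disjoint (S.filter (G.Adj x)) (Sᶜ.filter (G.Adj x)) :=
    Finset.disjoint_filter_filter disjoint_compl_right
  have h0 : G.degree x = (Finset.univ.filter (G.Adj x)).card := by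
    rw [← SimpleGraph.neighborFinset_eq_filter]; rfl
  rw [h0, h1, Finset.card_union_of_disjoint h2]
  push_cast; ring

lemma pset_in (G : SimpleGraph V) [DecidableRel G.Adj] {S : Finset V} {x : V} (hx : x ∈ S) :
    pset G x S = 1/2 + ((S.filter (G.Adj x)).card : ℝ) / (2 * (G.degree x : ℝ)) := by
  unfold pset
  rw [← Finset.add_sum_erase S (walkP G x) hx]
  have h1 : walkP G x x = 1/2 := by simp [walkP]
  have h2 : ∑ y ∈ S.erase x, walkP G x y
      = ((S.filter (G.Adj x)).card : ℝ) / (2 * (G.degree x : ℝ)) := by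
    have : ∀ y ∈ S.erase x, walkP G x y
        = if G.Adj x y then 1 / (2 * (G.degree x : ℝ)) else 0 := by
      intro y hy
      have : x ≠ y := fun h => (Finset.ne_of_mem_erase hy) h.symm
      simp [walkP, this]
    rw [Finset.sum_congr rfl this, ← Finset.sum_filter, Finset.filter_erase,
      Finset.erase_eq_of_notMem (by simp [G.irrefl]), Finset.sum_const, nsmul_eq_mul]
    ring
  rw [h1, h2]

lemma pset_out (G : SimpleGraph V) [DecidableRel G.Adj] {S : Finset V} {x : V} (hx : x ∉ S) :
    pset G x S = ((S.filter (G.Adj x)).card : ℝ) / (2 * (G.degree x : ℝ)) := by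
  unfold pset
  have : ∀ y ∈ S, walkP G x y = if G.Adj x y then 1 / (2 * (G.degree x : ℝ)) else 0 := by
    intro y hy
    have : x ≠ y := fun h => hx (h ▸ hy)
    simp [walkP, this]
  rw [Finset.sum_congr rfl this, ← Finset.sum_filter, Finset.sum_const, nsmul_eq_mul]
  ring

lemma e_le_deg (G : SimpleGraph V) [DecidableRel G.Adj] (S : Finset V) (x : V) :
    ((S.filter (G.Adj x)).card : ℝ) ≤ (G.degree x : ℝ) := by
  rw [deg_split G S x]
  have : (0:ℝ) ≤ ((Sᶜ.filter (G.Adj x)).card : ℝ) := by positivity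
  linarith

lemma half_bound (G : SimpleGraph V) [DecidableRel G.Adj] (S : Finset V) (x : V) :
    ((S.filter (G.Adj x)).card : ℝ) / (2 * (G.degree x : ℝ)) ≤ 1/2 := by
  rcases eq_or_lt_of_le (Nat.cast_nonneg (G.degree x) : (0:ℝ) ≤ _) with h | h
  · have he := e_le_deg G S x
    rw [← h] at he
    have : ((S.filter (G.Adj x)).card : ℝ) = 0 := le_antisymm he (by positivity)
    rw [this]; norm_num
  · rw [div_le_iff₀ (by positivity)]
    have := e_le_deg G S x
    linarith

lemma term_eq (G : SimpleGraph V) [DecidableRel G.Adj] (S : Finset V) (x : V) :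
    (G.degree x : ℝ) * (((S.filter (G.Adj x)).card : ℝ) / (2 * (G.degree x : ℝ)))
      = ((S.filter (G.Adj x)).card : ℝ) / 2 := by
  rcases eq_or_lt_of_le (Nat.cast_nonneg (G.degree x) : (0:ℝ) ≤ _) with h | h
  · have he := e_le_deg G S x
    rw [← h] at he
    have h0 : ((S.filter (G.Adj x)).card : ℝ) = 0 := le_antisymm he (by positivity)
    rw [h0, ← h]; ring
  · field_simp

lemma swap_sum (G : SimpleGraph V) [DecidableRel G.Adj] (S : Finset V) :
    ∑ x ∈ Sᶜ, ((S.filter (G.Adj x)).card : ℝ) = ∑ x ∈ S, ((Sᶜ.filter (G.Adj x)).card : ℝ) := by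
  have key : ∀ T R : Finset V, ∑ x ∈ T, ((R.filter (G.Adj x)).card : ℝ)
      = ∑ x ∈ T, ∑ y ∈ R, (if G.Adj x y then (1:ℝ) else 0) := by
    intro T R
    refine Finset.sum_congr rfl fun x _ => ?_
    rw [Finset.card_filter]; push_cast
    exact Finset.sum_congr rfl fun y _ => by split <;> simp
  rw [key, key, Finset.sum_comm]
  refine Finset.sum_congr rfl fun x _ => Finset.sum_congr rfl fun y _ => ?_
  simp [SimpleGraph.adj_comm]

/-- Proposition 1: for a set `S` with `μ(S) > 0`, in one step of the evolving set
process with uniform threshold `U`, `E[μ(S₁) | U ≤ 1/2] = μ(S) + ∂(S) = μ(S)(1 + φ(S))`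
and `E[μ(S₁) | U > 1/2] = μ(S) − ∂(S) = μ(S)(1 − φ(S))`. -/
theorem statement0 (G : SimpleGraph V) [DecidableRel G.Adj]
    (S : Finset V) (hS : 0 < vol G S) :
    (∫ u in (0:ℝ)..(1/2), vol G (esStep G S u)) / (1/2) = vol G S + bdry G S ∧
    (∫ u in (0:ℝ)..(1/2), vol G (esStep G S u)) / (1/2) = vol G S * (1 + phiCond G S) ∧
    (∫ u in (1/2:ℝ)..1, vol G (esStep G S u)) / (1/2) = vol G S - bdry G S ∧
    (∫ u in (1/2:ℝ)..1, vol G (esStep G S u)) / (1/2) = vol G S * (1 - phiCond G S) := by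
  have hvol : ∀ u : ℝ, vol G (esStep G S u)
      = ∑ x, (if u ≤ pset G x S then (G.degree x : ℝ) else 0) := by
    intro u; rw [vol, esStep, Finset.sum_filter]
  have hA : (∫ u in (0:ℝ)..(1/2), vol G (esStep G S u)) = (vol G S + bdry G S) / 2 := by
    have h1 : (∫ u in (0:ℝ)..(1/2), vol G (esStep G S u))
        = ∑ x, (G.degree x : ℝ) * max (min (1/2) (pset G x S) - 0) 0 := by
      simp only [hvol]
      rw [intervalIntegral.integral_finset_sum (fun i _ => stepIntegrable _ _ _ _)]
      exact Finset.sum_congr rfl fun x _ => stepInt 0 (1/2) _ _ (by norm_num)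
    have hS1 : ∀ x ∈ S, (G.degree x : ℝ) * max (min (1/2) (pset G x S) - 0) 0
        = (G.degree x : ℝ) / 2 := by
      intro x hx
      have hq0 : (0:ℝ) ≤ ((S.filter (G.Adj x)).card : ℝ) / (2 * (G.degree x : ℝ)) := by
        positivity
      have hp : (1/2 : ℝ) ≤ pset G x S := by rw [pset_in G hx]; linarith
      rw [min_eq_left hp, sub_zero, max_eq_left (by norm_num)]; ring
    have hS2 : ∀ x ∈ Sᶜ, (G.degree x : ℝ) * max (min (1/2) (pset G x S) - 0) 0
        = ((S.filter (G.Adj x)).card : ℝ) / 2 := by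
      intro x hx
      have hx' : x ∉ S := Finset.mem_compl.mp hx
      have hp := pset_out G hx'
      have hple : pset G x S ≤ 1/2 := by rw [hp]; exact half_bound G S x
      have hp0 : 0 ≤ pset G x S := by rw [hp]; positivity
      rw [min_eq_right hple, sub_zero, max_eq_left hp0, hp, term_eq]
    rw [h1, ← Finset.sum_add_sum_compl S, Finset.sum_congr rfl hS1,
      Finset.sum_congr rfl hS2, ← Finset.sum_div, ← Finset.sum_div, swap_sum, vol, bdry]
    ring
  have hB : (∫ u in (1/2:ℝ)..1, vol G (esStep G S u)) = (vol G S - bdry G S) / 2 := by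
    have h1 : (∫ u in (1/2:ℝ)..1, vol G (esStep G S u))
        = ∑ x, (G.degree x : ℝ) * max (min 1 (pset G x S) - 1/2) 0 := by
      simp only [hvol]
      rw [intervalIntegral.integral_finset_sum (fun i _ => stepIntegrable _ _ _ _)]
      exact Finset.sum_congr rfl fun x _ => stepInt (1/2) 1 _ _ (by norm_num)
    have hS1 : ∀ x ∈ S, (G.degree x : ℝ) * max (min 1 (pset G x S) - 1/2) 0
        = (G.degree x : ℝ) / 2 - ((Sᶜ.filter (G.Adj x)).card : ℝ) / 2 := by
      intro x hx
      have hpeq := pset_in G hx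
      have hq0 : (0:ℝ) ≤ ((S.filter (G.Adj x)).card : ℝ) / (2 * (G.degree x : ℝ)) := by
        positivity
      have hq := half_bound G S x
      have h1 : min 1 (pset G x S) = pset G x S := min_eq_right (by rw [hpeq]; linarith)
      have h2 : max (pset G x S - 1/2) 0
          = ((S.filter (G.Adj x)).card : ℝ) / (2 * (G.degree x : ℝ)) := by
        rw [hpeq, add_sub_cancel_left]; exact max_eq_left hq0
      rw [h1, h2, term_eq]
      have := deg_split G S x
      linarith
    have hS2 : ∀ x ∈ Sᶜ, (G.degree x : ℝ) * max (min 1 (pset G x S) - 1/2) 0 = 0 := by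
      intro x hx
      have hx' : x ∉ S := Finset.mem_compl.mp hx
      have hp := pset_out G hx'
      have hple : pset G x S ≤ 1/2 := by rw [hp]; exact half_bound G S x
      have hp0 : 0 ≤ pset G x S := by rw [hp]; positivity
      rw [min_eq_right (by linarith), max_eq_right (by linarith), mul_zero]
    rw [h1, ← Finset.sum_add_sum_compl S, Finset.sum_congr rfl hS1,
      Finset.sum_congr rfl hS2, Finset.sum_const_zero, Finset.sum_sub_distrib,
      vol, bdry, ← Finset.sum_div, ← Finset.sum_div]
    ring
  have hphi : phiCond G S = bdry G S / vol G S := rfl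
  refine ⟨by rw [hA]; ring, ?_, by rw [hB]; ring, ?_⟩
  · rw [hA, hphi]; field_simp
  · rw [hB, hphi]; field_simp
end
end

section
/- Let G=(V,E) be a finite simple undirected graph and let S ⊆ V have μ(S) > 0. Define the growth gauge ψ(S) by 1 − ψ(S) = E_S[√(μ(S₁)/μ(S))], where S₁ is one step of the evolving set process from S. Then ψ(S) ≥ φ(S)²/8. -/
open scoped Classical symmDiff

noncomputable section

variable {V : Type*} [Fintype V] [DecidableEq V]

/-- The growth gauge `ψ(S)`, defined by `1 - ψ(S) = E_S[√(μ(S₁)/μ(S))]` where the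
expectation is over one step of the evolving set process from `S`. -/
def psi (G : SimpleGraph V) [DecidableRel G.Adj] (S : Finset V) : ℝ :=
  1 - ∑ S' : Finset V, Kk G S S' * Real.sqrt (vol G S' / vol G S)

section Aux

open MeasureTheory Finset

variable (G : SimpleGraph V) [DecidableRel G.Adj] (S : Finset V)

lemma walkP_nonneg (x y : V) : 0 ≤ walkP G x y := by
  unfold walkP; split_ifs <;> positivity

lemma pset_nonneg (x : V) : 0 ≤ pset G x S :=
  Finset.sum_nonneg fun y _ => walkP_nonneg G x y

lemma card_filter_adj_le_degree (x : V) (T : Finset V) :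
    (T.filter (G.Adj x)).card ≤ G.degree x := by
  rw [← SimpleGraph.card_neighborFinset_eq_degree]
  apply Finset.card_le_card
  intro y hy
  rw [SimpleGraph.mem_neighborFinset]
  exact (Finset.mem_filter.mp hy).2

lemma sum_walkP_erase (x : V) (T : Finset V) :
    ∑ y ∈ T.erase x, walkP G x y
      = ((T.filter (G.Adj x)).card : ℝ) / (2 * (G.degree x : ℝ)) := by
  have h1 : ∀ y ∈ T.erase x, walkP G x y
      = if G.Adj x y then 1 / (2 * (G.degree x : ℝ)) else 0 := by
    intro y hy
    have hxy : x ≠ y := (Finset.ne_of_mem_erase hy).symm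
    simp [walkP, hxy]
  rw [Finset.sum_congr rfl h1, Finset.sum_ite, Finset.sum_const_zero, add_zero,
    Finset.sum_const, nsmul_eq_mul]
  have h2 : (T.erase x).filter (G.Adj x) = T.filter (G.Adj x) := by
    ext y
    simp only [Finset.mem_filter, Finset.mem_erase]
    constructor
    · rintro ⟨⟨_, hy⟩, ha⟩; exact ⟨hy, ha⟩
    · rintro ⟨hy, ha⟩; exact ⟨⟨(G.ne_of_adj ha).symm, hy⟩, ha⟩
  rw [h2]
  ring

lemma pset_of_not_mem {x : V} (hx : x ∉ S) :
    pset G x S = ((S.filter (G.Adj x)).card : ℝ) / (2 * (G.degree x : ℝ)) := by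
  rw [pset, ← sum_walkP_erase G x S, Finset.erase_eq_of_notMem hx]

lemma pset_of_mem {x : V} (hx : x ∈ S) :
    pset G x S = 1/2 + ((S.filter (G.Adj x)).card : ℝ) / (2 * (G.degree x : ℝ)) := by
  rw [pset, ← Finset.add_sum_erase _ _ hx, sum_walkP_erase G x S]
  simp [walkP]

lemma card_div_le_half (x : V) (T : Finset V) :
    ((T.filter (G.Adj x)).card : ℝ) / (2 * (G.degree x : ℝ)) ≤ 1/2 := by
  rcases Nat.eq_zero_or_pos (G.degree x) with h | h
  · have : (T.filter (G.Adj x)).card = 0 :=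
      Nat.le_zero.mp (h ▸ card_filter_adj_le_degree G x T)
    simp [this]
  · have hd : (0:ℝ) < G.degree x := by exact_mod_cast h
    rw [div_le_iff₀ (by linarith)]
    have := card_filter_adj_le_degree G x T
    have : ((T.filter (G.Adj x)).card : ℝ) ≤ G.degree x := by exact_mod_cast this
    linarith

lemma pset_le_one (x : V) : pset G x S ≤ 1 := by
  have h1 : pset G x S ≤ pset G x Finset.univ :=
    Finset.sum_le_sum_of_subset_of_nonneg (Finset.subset_univ S)
      fun y _ _ => walkP_nonneg G x y
  refine h1.trans ?_
  rw [pset, ← Finset.add_sum_erase _ _ (Finset.mem_univ x), sum_walkP_erase G x]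
  have h2 := card_div_le_half G x (Finset.univ : Finset V)
  have hw : walkP G x x = 1/2 := by simp [walkP]
  rw [hw]
  linarith

lemma half_le_pset {x : V} (hx : x ∈ S) : 1/2 ≤ pset G x S := by
  rw [pset_of_mem G S hx]
  have h1 : 0 ≤ ((S.filter (G.Adj x)).card : ℝ) := Nat.cast_nonneg _
  have h2 : (0:ℝ) ≤ 2 * (G.degree x : ℝ) := by positivity
  have := div_nonneg h1 h2
  linarith

lemma pset_le_half {x : V} (hx : x ∉ S) : pset G x S ≤ 1/2 := by
  rw [pset_of_not_mem G S hx]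
  exact card_div_le_half G x S

lemma deg_mul_pset_of_not_mem {x : V} (hx : x ∉ S) :
    (G.degree x : ℝ) * pset G x S = ((S.filter (G.Adj x)).card : ℝ) / 2 := by
  rw [pset_of_not_mem G S hx]
  rcases Nat.eq_zero_or_pos (G.degree x) with h | h
  · have : (S.filter (G.Adj x)).card = 0 :=
      Nat.le_zero.mp (h ▸ card_filter_adj_le_degree G x S)
    simp [this, h]
  · have hd : (0:ℝ) < G.degree x := by exact_mod_cast h
    field_simp

lemma deg_mul_pset_of_mem {x : V} (hx : x ∈ S) :
    (G.degree x : ℝ) * pset G x S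
      = (G.degree x : ℝ) / 2 + ((S.filter (G.Adj x)).card : ℝ) / 2 := by
  rw [pset_of_mem G S hx]
  rcases Nat.eq_zero_or_pos (G.degree x) with h | h
  · have : (S.filter (G.Adj x)).card = 0 :=
      Nat.le_zero.mp (h ▸ card_filter_adj_le_degree G x S)
    simp [this, h]
  · have hd : (0:ℝ) < G.degree x := by exact_mod_cast h
    field_simp

lemma degree_split (x : V) :
    (G.degree x : ℝ) = ((S.filter (G.Adj x)).card : ℝ) + ((Sᶜ.filter (G.Adj x)).card : ℝ) := by
  have h1 : S.filter (G.Adj x) ∪ Sᶜ.filter (G.Adj x) = Finset.univ.filter (G.Adj x) := by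
    rw [← Finset.filter_union, Finset.union_compl]
  have h2 : Disjoint (S.filter (G.Adj x)) (Sᶜ.filter (G.Adj x)) :=
    Finset.disjoint_filter_filter disjoint_compl_right
  have h3 : G.degree x = (S.filter (G.Adj x)).card + (Sᶜ.filter (G.Adj x)).card := by
    rw [← Finset.card_union_of_disjoint h2, h1]
    rw [← SimpleGraph.card_neighborFinset_eq_degree]
    congr 1
    ext y
    simp [SimpleGraph.mem_neighborFinset]
  exact_mod_cast h3

lemma bdry_symm :
    ∑ x ∈ Sᶜ, ((S.filter (G.Adj x)).card : ℝ) = bdry G S := by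
  rw [bdry]
  have h1 : ∀ x, ((S.filter (G.Adj x)).card : ℝ) = ∑ y ∈ S, if G.Adj x y then (1:ℝ) else 0 := by
    intro x; rw [Finset.sum_ite, Finset.sum_const_zero, add_zero, Finset.sum_const]; simp
  have h2 : ∀ x, ((Sᶜ.filter (G.Adj x)).card : ℝ) = ∑ y ∈ Sᶜ, if G.Adj x y then (1:ℝ) else 0 := by
    intro x; rw [Finset.sum_ite, Finset.sum_const_zero, add_zero, Finset.sum_const]; simp
  simp_rw [h1, h2]
  rw [Finset.sum_comm]
  apply Finset.sum_congr rfl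
  intro x _
  apply Finset.sum_congr rfl
  intro y _
  simp [SimpleGraph.adj_comm]

lemma bdry_nonneg : 0 ≤ bdry G S :=
  Finset.sum_nonneg fun x _ => Nat.cast_nonneg _

lemma bdry_le_vol : bdry G S ≤ vol G S := by
  apply Finset.sum_le_sum
  intro x _
  rw [degree_split G S x]
  have : (0:ℝ) ≤ ((S.filter (G.Adj x)).card : ℝ) := Nat.cast_nonneg _
  linarith

lemma measurable_esStepSet (S' : Finset V) :
    MeasurableSet {u : ℝ | esStep G S u = S'} := by
  have h : {u : ℝ | esStep G S u = S'} =
      ⋂ y : V, {u : ℝ | (u ≤ pset G y S) ↔ (y ∈ S')} := by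
    ext u
    simp only [Set.mem_setOf_eq, Set.mem_iInter, Finset.ext_iff, esStep,
      Finset.mem_filter, Finset.mem_univ, true_and]
  rw [h]
  refine MeasurableSet.iInter fun y => ?_
  by_cases hy : y ∈ S'
  · simp only [hy, iff_true]
    exact measurableSet_Iic
  · simp only [hy, iff_false, not_le]
    exact measurableSet_Ioi

lemma pairwise_disjoint_pieces (I : Set ℝ) :
    ((Finset.univ : Finset (Finset V)) : Set (Finset V)).PairwiseDisjoint
      (fun S' => I ∩ {u | esStep G S u = S'}) := by
  intro a _ b _ hab
  refine Set.disjoint_left.mpr fun u hu hu' => hab ?_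
  exact hu.2.symm.trans hu'.2

lemma union_pieces (I : Set ℝ) :
    ⋃ S' ∈ (Finset.univ : Finset (Finset V)), (I ∩ {u | esStep G S u = S'}) = I := by
  ext u
  simp only [Set.mem_iUnion, Finset.mem_univ, Set.mem_inter_iff, Set.mem_setOf_eq,
    exists_true_left, true_and]
  constructor
  · rintro ⟨S', hu, _⟩; exact hu
  · intro hu; exact ⟨esStep G S u, hu, rfl⟩

lemma piece_ne_top (I : Set ℝ) (hfin : volume I ≠ ⊤) (S' : Finset V) :
    volume (I ∩ {u | esStep G S u = S'}) ≠ ⊤ :=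
  ne_top_of_le_ne_top hfin (measure_mono Set.inter_subset_left)

lemma sum_measure_part (I : Set ℝ) (hI : MeasurableSet I) (hfin : volume I ≠ ⊤) :
    ∑ S' : Finset V, (volume (I ∩ {u | esStep G S u = S'})).toReal = (volume I).toReal := by
  rw [← ENNReal.toReal_sum (fun S' _ => piece_ne_top G S I hfin S')]
  congr 1
  rw [← measure_biUnion_finset (pairwise_disjoint_pieces G S I)
    (fun b _ => hI.inter (measurable_esStepSet G S b)), union_pieces G S I]

lemma sum_measure_part_mul (I : Set ℝ) (hI : MeasurableSet I) (hfin : volume I ≠ ⊤)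
    (c : V → ℝ) :
    ∑ S' : Finset V, (volume (I ∩ {u | esStep G S u = S'})).toReal * ∑ y ∈ S', c y
      = ∑ y : V, c y * (volume (I ∩ {u | u ≤ pset G y S})).toReal := by
  have h1 : ∀ S' : Finset V, ∑ y ∈ S', c y = ∑ y : V, if y ∈ S' then c y else 0 := by
    intro S'
    rw [Finset.sum_ite_mem, Finset.univ_inter]
  simp_rw [h1, Finset.mul_sum]
  rw [Finset.sum_comm]
  apply Finset.sum_congr rfl
  intro y _
  have h2 : ∀ S' : Finset V,
      (volume (I ∩ {u | esStep G S u = S'})).toReal * (if y ∈ S' then c y else 0)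
      = c y * (if y ∈ S' then (volume (I ∩ {u | esStep G S u = S'})).toReal else 0) := by
    intro S'; split_ifs <;> ring
  rw [Finset.sum_congr rfl fun S' _ => h2 S', ← Finset.mul_sum]
  congr 1
  rw [Finset.sum_ite, Finset.sum_const_zero, add_zero]
  rw [← ENNReal.toReal_sum (fun S' _ => piece_ne_top G S I hfin S')]
  congr 1
  rw [← measure_biUnion_finset
    ((pairwise_disjoint_pieces G S I).subset (by intro z _; simp))
    (fun b _ => hI.inter (measurable_esStepSet G S b))]
  congr 1
  ext u
  simp only [Set.mem_iUnion, Finset.mem_filter, Finset.mem_univ, true_and,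
    Set.mem_inter_iff, Set.mem_setOf_eq]
  constructor
  · rintro ⟨S', hS', hu, hes⟩
    refine ⟨hu, ?_⟩
    have : y ∈ esStep G S u := hes ▸ hS'
    simpa [esStep] using this
  · rintro ⟨hu, hle⟩
    exact ⟨esStep G S u, by simpa [esStep] using hle, hu, rfl⟩

lemma volC_up (y : V) :
    (volume (Set.Icc (0:ℝ) (1/2) ∩ {u | u ≤ pset G y S})).toReal
      = if y ∈ S then 1/2 else pset G y S := by
  have hset : Set.Icc (0:ℝ) (1/2) ∩ {u | u ≤ pset G y S}
      = Set.Icc 0 (min (1/2) (pset G y S)) := by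
    ext u
    simp only [Set.mem_inter_iff, Set.mem_Icc, Set.mem_setOf_eq, le_min_iff]
    tauto
  rw [hset, Real.volume_Icc, sub_zero, ENNReal.toReal_ofReal
    (le_min (by norm_num) (pset_nonneg G S y))]
  by_cases hy : y ∈ S
  · rw [if_pos hy, min_eq_left (half_le_pset G S hy)]
  · rw [if_neg hy, min_eq_right (pset_le_half G S hy)]

lemma volC_dn (y : V) :
    (volume (Set.Ioc (1/2 : ℝ) 1 ∩ {u | u ≤ pset G y S})).toReal
      = if y ∈ S then pset G y S - 1/2 else 0 := by
  have hset : Set.Ioc (1/2 : ℝ) 1 ∩ {u | u ≤ pset G y S}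
      = Set.Ioc (1/2) (min 1 (pset G y S)) := by
    ext u
    simp only [Set.mem_inter_iff, Set.mem_Ioc, Set.mem_setOf_eq, le_min_iff]
    tauto
  rw [hset, Real.volume_Ioc, min_eq_right (pset_le_one G S y)]
  by_cases hy : y ∈ S
  · rw [if_pos hy, ENNReal.toReal_ofReal (by linarith [half_le_pset G S hy])]
  · rw [if_neg hy, ENNReal.ofReal_eq_zero.mpr (by linarith [pset_le_half G S hy])]
    simp

lemma Kk_split (S' : Finset V) :
    Kk G S S' = (volume (Set.Icc (0:ℝ) (1/2) ∩ {u | esStep G S u = S'})).toReal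
      + (volume (Set.Ioc (1/2 : ℝ) 1 ∩ {u | esStep G S u = S'})).toReal := by
  have hset : {u : ℝ | u ∈ Set.Icc (0:ℝ) 1 ∧ esStep G S u = S'}
      = (Set.Icc (0:ℝ) (1/2) ∩ {u | esStep G S u = S'})
        ∪ (Set.Ioc (1/2 : ℝ) 1 ∩ {u | esStep G S u = S'}) := by
    rw [← Set.union_inter_distrib_right, Set.Icc_union_Ioc_eq_Icc (by norm_num) (by norm_num)]
    rfl
  have hdisj : Disjoint (Set.Icc (0:ℝ) (1/2) ∩ {u | esStep G S u = S'})
      (Set.Ioc (1/2 : ℝ) 1 ∩ {u | esStep G S u = S'}) :=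
    ((Set.Iic_disjoint_Ioc (le_refl (1/2 : ℝ))).mono_left Set.Icc_subset_Iic_self).mono
      Set.inter_subset_left Set.inter_subset_left
  rw [Kk, hset, measure_union hdisj
    (measurableSet_Ioc.inter (measurable_esStepSet G S S'))]
  rw [ENNReal.toReal_add
    (piece_ne_top G S _ (by rw [Real.volume_Icc]; exact ENNReal.ofReal_ne_top) S')
    (piece_ne_top G S _ (by rw [Real.volume_Ioc]; exact ENNReal.ofReal_ne_top) S')]

end Aux

/-- Proposition 2: for any set `S` with `μ(S) > 0`, the growth gauge and conductance
satisfy `ψ(S) ≥ φ(S)²/8`. -/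
theorem statement2 (G : SimpleGraph V) [DecidableRel G.Adj]
    (S : Finset V) (hS : 0 < vol G S) :
    phiCond G S ^ 2 / 8 ≤ psi G S := by
  classical
  open MeasureTheory in
  set μ := vol G S with hμdef
  set φ := phiCond G S with hφdef
  have hvol_nonneg : ∀ S' : Finset V, 0 ≤ vol G S' :=
    fun S' => Finset.sum_nonneg fun x _ => Nat.cast_nonneg _
  have hb0 : 0 ≤ bdry G S := bdry_nonneg G S
  have hbμ : bdry G S ≤ μ := bdry_le_vol G S
  have hφ0 : 0 ≤ φ := div_nonneg hb0 hS.le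
  have hφ1 : φ ≤ 1 := (div_le_one hS).mpr hbμ
  -- the two half kernels
  set Kup : Finset V → ℝ :=
    fun S' => (volume (Set.Icc (0:ℝ) (1/2) ∩ {u | esStep G S u = S'})).toReal with hKup
  set Kdn : Finset V → ℝ :=
    fun S' => (volume (Set.Ioc (1/2 : ℝ) 1 ∩ {u | esStep G S u = S'})).toReal with hKdn
  have hKupfin : volume (Set.Icc (0:ℝ) (1/2)) ≠ ⊤ := by
    rw [Real.volume_Icc]; exact ENNReal.ofReal_ne_top
  have hKdnfin : volume (Set.Ioc (1/2 : ℝ) 1) ≠ ⊤ := by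
    rw [Real.volume_Ioc]; exact ENNReal.ofReal_ne_top
  have hKup0 : ∀ S', 0 ≤ Kup S' := fun S' => ENNReal.toReal_nonneg
  have hKdn0 : ∀ S', 0 ≤ Kdn S' := fun S' => ENNReal.toReal_nonneg
  have hsplit : ∀ S', Kk G S S' = Kup S' + Kdn S' := Kk_split G S
  -- total masses
  have hup1 : ∑ S' : Finset V, Kup S' = 1/2 := by
    rw [hKup, sum_measure_part G S _ measurableSet_Icc hKupfin, Real.volume_Icc, sub_zero,
      ENNReal.toReal_ofReal (by norm_num)]
  have hdn1 : ∑ S' : Finset V, Kdn S' = 1/2 := by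
    rw [hKdn, sum_measure_part G S _ measurableSet_Ioc hKdnfin, Real.volume_Ioc,
      ENNReal.toReal_ofReal (by norm_num)]
    norm_num
  -- expected volumes
  have hupvol : ∑ S' : Finset V, Kup S' * vol G S' = (μ + bdry G S) / 2 := by
    have h := sum_measure_part_mul G S _ measurableSet_Icc hKupfin
      (fun y => (G.degree y : ℝ))
    rw [hKup]
    simp only [vol]
    rw [h]
    have h2 : ∀ y : V, (G.degree y : ℝ)
        * (volume (Set.Icc (0:ℝ) (1/2) ∩ {u | u ≤ pset G y S})).toReal
        = if y ∈ S then (G.degree y : ℝ) / 2 else ((S.filter (G.Adj y)).card : ℝ) / 2 := by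
      intro y
      rw [volC_up G S y]
      by_cases hy : y ∈ S
      · rw [if_pos hy, if_pos hy]; ring
      · rw [if_neg hy, if_neg hy, deg_mul_pset_of_not_mem G S hy]
    rw [Finset.sum_congr rfl fun y _ => h2 y]
    rw [Finset.sum_ite, ← Finset.sum_div, ← Finset.sum_div]
    have e1 : Finset.univ.filter (· ∈ S) = S := by ext y; simp
    have e2 : Finset.univ.filter (¬ · ∈ S) = Sᶜ := by ext y; simp
    rw [e1, e2, ← vol, bdry_symm G S]
    ring
  have hdnvol : ∑ S' : Finset V, Kdn S' * vol G S' = (μ - bdry G S) / 2 := by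
    have h := sum_measure_part_mul G S _ measurableSet_Ioc hKdnfin
      (fun y => (G.degree y : ℝ))
    rw [hKdn]
    simp only [vol]
    rw [h]
    have h2 : ∀ y : V, (G.degree y : ℝ)
        * (volume (Set.Ioc (1/2 : ℝ) 1 ∩ {u | u ≤ pset G y S})).toReal
        = if y ∈ S then ((S.filter (G.Adj y)).card : ℝ) / 2 else 0 := by
      intro y
      rw [volC_dn G S y]
      by_cases hy : y ∈ S
      · rw [if_pos hy, if_pos hy, mul_sub]
        rw [deg_mul_pset_of_mem G S hy]
        ring
      · rw [if_neg hy, if_neg hy, mul_zero]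
    rw [Finset.sum_congr rfl fun y _ => h2 y]
    rw [Finset.sum_ite, Finset.sum_const_zero, add_zero]
    have e1 : Finset.univ.filter (· ∈ S) = S := by ext y; simp
    rw [e1]
    have h3 : ∑ y ∈ S, ((S.filter (G.Adj y)).card : ℝ) / 2 = (μ - bdry G S) / 2 := by
      rw [hμdef, vol, bdry, ← Finset.sum_sub_distrib, Finset.sum_div]
      apply Finset.sum_congr rfl
      intro y _
      rw [degree_split G S y]
      ring
    exact h3
  -- Cauchy–Schwarz for each half
  have CS : ∀ (K : Finset V → ℝ), (∀ S', 0 ≤ K S') → ∀ a b : ℝ,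
      (∑ S' : Finset V, K S' = a) → (∑ S' : Finset V, K S' * vol G S' = b) →
      ∑ S' : Finset V, K S' * Real.sqrt (vol G S' / μ)
        ≤ Real.sqrt a * Real.sqrt (b / μ) := by
    intro K hK a b ha hb
    have key : ∀ S' : Finset V, K S' * Real.sqrt (vol G S' / μ)
        = Real.sqrt (K S') * Real.sqrt (K S' * (vol G S' / μ)) := by
      intro S'
      rw [Real.sqrt_mul (hK S'), ← mul_assoc, Real.mul_self_sqrt (hK S')]
    rw [Finset.sum_congr rfl fun S' _ => key S']
    have := Real.sum_sqrt_mul_sqrt_le (Finset.univ : Finset (Finset V))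
      (f := K) (g := fun S' => K S' * (vol G S' / μ)) hK
      (fun S' => mul_nonneg (hK S') (div_nonneg (hvol_nonneg S') hS.le))
    refine this.trans ?_
    rw [ha]
    have : ∑ S' : Finset V, K S' * (vol G S' / μ) = b / μ := by
      rw [← hb, Finset.sum_div]
      apply Finset.sum_congr rfl
      intro S' _; ring
    rw [this]
  have sqrt_prod : ∀ t : ℝ, 0 ≤ t →
      Real.sqrt (1/2) * Real.sqrt (t/2) = Real.sqrt t / 2 := by
    intro t ht
    rw [← Real.sqrt_mul (by norm_num : (0:ℝ) ≤ 1/2),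
      show (1:ℝ)/2 * (t/2) = t * (1/2)^2 by ring,
      Real.sqrt_mul ht, Real.sqrt_sq (by norm_num : (0:ℝ) ≤ 1/2)]
    ring
  have hup : ∑ S' : Finset V, Kup S' * Real.sqrt (vol G S' / μ)
      ≤ Real.sqrt (1+φ) / 2 := by
    have h := CS Kup hKup0 (1/2) ((μ + bdry G S)/2) hup1 hupvol
    have h1 : (μ + bdry G S) / 2 / μ = (1 + φ) / 2 := by
      rw [hφdef, phiCond, ← hμdef]
      field_simp
    rwa [h1, sqrt_prod _ (by linarith)] at h
  have hdn : ∑ S' : Finset V, Kdn S' * Real.sqrt (vol G S' / μ)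
      ≤ Real.sqrt (1-φ) / 2 := by
    have h := CS Kdn hKdn0 (1/2) ((μ - bdry G S)/2) hdn1 hdnvol
    have h1 : (μ - bdry G S) / 2 / μ = (1 - φ) / 2 := by
      rw [hφdef, phiCond, ← hμdef]
      field_simp
    rwa [h1, sqrt_prod _ (by linarith)] at h
  -- the elementary inequality √(1+φ) + √(1-φ) ≤ 2 - φ²/4
  have hs1 : Real.sqrt (1 - φ^2) ≤ 1 - φ^2/2 := by
    have h : (1 - φ^2 : ℝ) ≤ (1 - φ^2/2)^2 := by nlinarith
    calc Real.sqrt (1 - φ^2) ≤ Real.sqrt ((1 - φ^2/2)^2) := Real.sqrt_le_sqrt h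
      _ = 1 - φ^2/2 := Real.sqrt_sq (by nlinarith)
  have hprod : Real.sqrt (1+φ) * Real.sqrt (1-φ) = Real.sqrt (1 - φ^2) := by
    rw [← Real.sqrt_mul (by linarith : (0:ℝ) ≤ 1+φ)]
    congr 1
    ring
  have hsq : (Real.sqrt (1+φ) + Real.sqrt (1-φ))^2 ≤ (2 - φ^2/4)^2 := by
    rw [add_sq, Real.sq_sqrt (by linarith : (0:ℝ) ≤ 1+φ),
      Real.sq_sqrt (by linarith : (0:ℝ) ≤ 1-φ), mul_assoc, hprod]
    nlinarith [hs1]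
  have hkey : Real.sqrt (1+φ) + Real.sqrt (1-φ) ≤ 2 - φ^2/4 := by
    have hA : 0 ≤ Real.sqrt (1+φ) + Real.sqrt (1-φ) := by positivity
    have hB : (0:ℝ) ≤ 2 - φ^2/4 := by nlinarith
    have := Real.sqrt_le_sqrt hsq
    rwa [Real.sqrt_sq hA, Real.sqrt_sq hB] at this
  have hsum : ∑ S' : Finset V, Kk G S S' * Real.sqrt (vol G S' / μ) ≤ 1 - φ^2/8 := by
    calc ∑ S' : Finset V, Kk G S S' * Real.sqrt (vol G S' / μ)
        = ∑ S' : Finset V, (Kup S' * Real.sqrt (vol G S' / μ)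
            + Kdn S' * Real.sqrt (vol G S' / μ)) := by
          apply Finset.sum_congr rfl
          intro S' _
          rw [hsplit S']
          ring
      _ = (∑ S' : Finset V, Kup S' * Real.sqrt (vol G S' / μ))
            + ∑ S' : Finset V, Kdn S' * Real.sqrt (vol G S' / μ) :=
          Finset.sum_add_distrib
      _ ≤ Real.sqrt (1+φ) / 2 + Real.sqrt (1-φ) / 2 := add_le_add hup hdn
      _ ≤ 1 - φ^2/8 := by linarith
  unfold psi
  rw [← hμdef]
  linarith
end
end

section
/- Let G=(V,E) be a finite simple undirected graph, let A ⊆ V be nonempty, and let T be a nonnegative integer. For a vertex x, let esc(x,T,A) be the probability that a lazy random walk started from x leaves A within the first T steps, and define A_T = { x ∈ A : esc(x,T,A) ≤ T·φ(A) }. Then μ(A_T) ≥ (1/2)·μ(A). -/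
open scoped Classical symmDiff

noncomputable section

variable {V : Type*} [Fintype V] [DecidableEq V]

/-- `esc(x,T,A)`: the probability that the lazy random walk started from `x`
leaves `A` within the first `T` steps. -/
def escProb (G : SimpleGraph V) [DecidableRel G.Adj] (x : V) (T : ℕ) (A : Finset V) : ℝ :=
  ∑ v : Fin (T+1) → V,
    if v 0 = x ∧ ∃ j : Fin (T+1), v j ∉ A
    then ∏ j : Fin T, walkP G (v j.castSucc) (v j.succ) else 0

set_option linter.unusedSectionVars false

namespace Aux

variable (G : SimpleGraph V) [DecidableRel G.Adj]

/-- path weight -/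
def wgt (T : ℕ) (v : Fin (T+1) → V) : ℝ := ∏ j : Fin T, walkP G (v j.castSucc) (v j.succ)

lemma walkP_nonneg (x y : V) : 0 ≤ walkP G x y := by
  unfold walkP; split_ifs <;> positivity

lemma wgt_nonneg (T : ℕ) (v : Fin (T+1) → V) : 0 ≤ wgt G T v :=
  Finset.prod_nonneg fun j _ => walkP_nonneg G _ _

lemma wgt_zero (v : Fin 1 → V) : wgt G 0 v = 1 := by simp [wgt]

lemma wgt_succ (T : ℕ) (v : Fin (T+2) → V) :
    wgt G (T+1) v = walkP G (v 0) (v 1) * wgt G T (Fin.tail v) := by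
  unfold wgt
  rw [Fin.prod_univ_succ]
  congr 1

lemma sum_pi_succ (T : ℕ) (F : (Fin (T+2) → V) → ℝ) :
    ∑ v : Fin (T+2) → V, F v = ∑ x0 : V, ∑ t : Fin (T+1) → V, F (Fin.cons x0 t) := by
  calc ∑ v : Fin (T+2) → V, F v
      = ∑ p : V × (Fin (T+1) → V), F (Fin.cons p.1 p.2) :=
        Fintype.sum_equiv (Fin.consEquiv fun _ => V).symm _ _
          (fun v => by simp [Fin.consEquiv, Fin.cons_self_tail])
    _ = ∑ x0 : V, ∑ t : Fin (T+1) → V, F (Fin.cons x0 t) := Fintype.sum_prod_type _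

@[simp] lemma cons_one (T : ℕ) (x0 : V) (t : Fin (T+1) → V) :
    (Fin.cons x0 t : Fin (T+2) → V) 1 = t 0 := by
  have h : (1 : Fin (T+2)) = (0 : Fin (T+1)).succ := by
    apply Fin.ext; simp
  rw [h, Fin.cons_succ]

lemma sum_fiber (T : ℕ) (F : (Fin (T+1) → V) → ℝ) :
    ∑ t : Fin (T+1) → V, F t = ∑ y : V, ∑ t : Fin (T+1) → V, if t 0 = y then F t else 0 := by
  rw [Finset.sum_comm]
  apply Finset.sum_congr rfl
  intro t _
  simp

def SF : ℕ → V → ℝ := fun T x =>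
  ∑ v : Fin (T+1) → V, if v 0 = x then wgt G T v else 0

def stF (A : Finset V) : ℕ → V → ℝ := fun T x =>
  ∑ v : Fin (T+1) → V, if v 0 = x ∧ ∀ j, v j ∈ A then wgt G T v else 0

lemma SF_zero (x : V) : SF G 0 x = 1 := by
  have h : SF G 0 x = ∑ y : V, if y = x then (1:ℝ) else 0 :=
    Fintype.sum_equiv (Equiv.funUnique (Fin 1) V) _ _
      (fun v => by simp [wgt_zero, Equiv.funUnique])
  rw [h]
  simp

lemma stF_zero (A : Finset V) (x : V) : stF G A 0 x = if x ∈ A then 1 else 0 := by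
  have h : stF G A 0 x = ∑ y : V, if y = x ∧ y ∈ A then (1:ℝ) else 0 :=
    Fintype.sum_equiv (Equiv.funUnique (Fin 1) V) _ _
      (fun v => by
        simp only [Equiv.funUnique, Equiv.coe_fn_mk, wgt_zero]
        congr 1
        simp [Fin.forall_fin_one])
  rw [h]
  rcases Classical.em (x ∈ A) with hx | hx
  · rw [if_pos hx, Finset.sum_eq_single x] <;> simp_all
  · rw [if_neg hx]
    apply Finset.sum_eq_zero
    intro y _
    rw [if_neg]
    rintro ⟨rfl, h2⟩
    exact hx h2

lemma SF_nonneg (T : ℕ) (x : V) : 0 ≤ SF G T x :=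
  Finset.sum_nonneg fun v _ => by split_ifs; exacts [wgt_nonneg G T v, le_refl 0]

lemma stF_nonneg (A : Finset V) (T : ℕ) (x : V) : 0 ≤ stF G A T x :=
  Finset.sum_nonneg fun v _ => by split_ifs; exacts [wgt_nonneg G T v, le_refl 0]

lemma stF_le_SF (A : Finset V) (T : ℕ) (x : V) : stF G A T x ≤ SF G T x := by
  apply Finset.sum_le_sum
  intro v _
  split_ifs with h1 h2 h2
  · exact le_refl _
  · exact absurd h1.1 h2
  · exact wgt_nonneg G T v
  · exact le_refl 0

lemma stF_eq_zero (A : Finset V) (T : ℕ) {x : V} (hx : x ∉ A) : stF G A T x = 0 := by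
  apply Finset.sum_eq_zero
  intro v _
  rw [if_neg]
  rintro ⟨h0, hall⟩
  exact hx (h0 ▸ hall 0)

lemma SF_succ (T : ℕ) (x : V) :
    SF G (T+1) x = ∑ y, walkP G x y * SF G T y := by
  unfold SF
  rw [sum_pi_succ]
  simp only [wgt_succ, Fin.cons_zero, cons_one, Fin.tail_cons]
  have hpull : ∀ x0 : V,
      (∑ t : Fin (T+1) → V, if x0 = x then walkP G x0 (t 0) * wgt G T t else 0)
      = if x0 = x then ∑ t : Fin (T+1) → V, walkP G x0 (t 0) * wgt G T t else 0 := by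
    intro x0; split_ifs <;> simp
  simp only [hpull]
  rw [Finset.sum_ite_eq' Finset.univ x
    (fun x0 => ∑ t : Fin (T+1) → V, walkP G x0 (t 0) * wgt G T t), if_pos (Finset.mem_univ x)]
  rw [sum_fiber]
  apply Finset.sum_congr rfl
  intro y _
  rw [Finset.mul_sum]
  apply Finset.sum_congr rfl
  intro t _
  split_ifs with h
  · rw [h]
  · ring

lemma stF_succ (A : Finset V) (T : ℕ) (x : V) :
    stF G A (T+1) x = if x ∈ A then ∑ y, walkP G x y * stF G A T y else 0 := by
  unfold stF
  rw [sum_pi_succ]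
  have hcond : ∀ (x0 : V) (t : Fin (T+1) → V),
      ((∀ j : Fin (T+2), (Fin.cons x0 t : Fin (T+2) → V) j ∈ A) ↔ (x0 ∈ A ∧ ∀ j : Fin (T+1), t j ∈ A)) := by
    intro x0 t
    constructor
    · intro h; exact ⟨by simpa using h 0, fun j => by simpa using h j.succ⟩
    · rintro ⟨h0, h1⟩ j
      refine Fin.cases ?_ ?_ j <;> simp [h0, h1]
  simp only [wgt_succ, Fin.cons_zero, cons_one, Fin.tail_cons, hcond]
  have hsplit : ∀ x0 : V, ∀ t : Fin (T+1) → V,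
      (if x0 = x ∧ x0 ∈ A ∧ ∀ j : Fin (T+1), t j ∈ A
        then walkP G x0 (t 0) * wgt G T t else 0)
      = if x0 = x then (if x0 ∈ A ∧ ∀ j : Fin (T+1), t j ∈ A
        then walkP G x0 (t 0) * wgt G T t else 0) else 0 := by
    intro x0 t
    split_ifs <;> tauto
  simp only [hsplit]
  have hpull : ∀ x0 : V,
      (∑ t : Fin (T+1) → V, if x0 = x then (if x0 ∈ A ∧ ∀ j : Fin (T+1), t j ∈ A
        then walkP G x0 (t 0) * wgt G T t else 0) else 0)
      = if x0 = x then (∑ t : Fin (T+1) → V, if x0 ∈ A ∧ ∀ j : Fin (T+1), t j ∈ A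
        then walkP G x0 (t 0) * wgt G T t else 0) else 0 := by
    intro x0; split_ifs <;> simp
  simp only [hpull]
  rw [Finset.sum_ite_eq' Finset.univ x, if_pos (Finset.mem_univ x)]
  by_cases hx : x ∈ A
  · rw [if_pos hx]
    simp only [hx, true_and]
    rw [sum_fiber]
    apply Finset.sum_congr rfl
    intro y _
    rw [Finset.mul_sum]
    apply Finset.sum_congr rfl
    intro t _
    by_cases h1 : t 0 = y
    · by_cases h2 : ∀ j : Fin (T+1), t j ∈ A
      · simp [h1, h2]
      · simp [h1, h2]
    · simp [h1]
  · rw [if_neg hx]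
    apply Finset.sum_eq_zero
    intro t _
    rw [if_neg]
    tauto
lemma degree_pos_of_adj {x y : V} (h : G.Adj x y) : (0:ℝ) < G.degree x := by
  have : 0 < G.degree x := by
    rw [SimpleGraph.degree_pos_iff_exists_adj]; exact ⟨y, h⟩
  exact_mod_cast this

lemma deg_walkP_ne {x y : V} (h : x ≠ y) :
    (G.degree x : ℝ) * walkP G x y = if G.Adj x y then 1/2 else 0 := by
  unfold walkP
  rw [if_neg h]
  split_ifs with h2
  · have hd := degree_pos_of_adj G h2
    field_simp
  · ring

lemma reversible (x y : V) :
    (G.degree x : ℝ) * walkP G x y = (G.degree y : ℝ) * walkP G y x := by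
  rcases eq_or_ne x y with rfl | h
  · rfl
  · rw [deg_walkP_ne G h, deg_walkP_ne G h.symm.symm.symm]
    simp [G.adj_comm]

lemma walkP_split (x y : V) : walkP G x y =
    (if x = y then (1:ℝ)/2 else 0) + (if G.Adj x y then 1/(2*(G.degree x:ℝ)) else 0) := by
  unfold walkP
  rcases eq_or_ne x y with rfl | h
  · simp
  · rw [if_neg h, if_neg h, zero_add]

lemma rowSum (x : V) : ∑ y, walkP G x y =
    1/2 + (G.degree x : ℝ) * (1/(2*(G.degree x:ℝ))) := by
  simp only [walkP_split G x]
  rw [Finset.sum_add_distrib]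
  congr 1
  · simp
  · rw [Finset.sum_ite, Finset.sum_const, Finset.sum_const]
    have : (Finset.univ.filter (G.Adj x)).card = G.degree x := by
      rw [← SimpleGraph.neighborFinset_eq_filter]; rfl
    simp [this, mul_comm]

lemma rowSum_le_one (x : V) : ∑ y, walkP G x y ≤ 1 := by
  rw [rowSum]
  rcases Nat.eq_zero_or_pos (G.degree x) with h | h
  · simp [h]; norm_num
  · have : (0:ℝ) < G.degree x := by exact_mod_cast h
    have : (G.degree x : ℝ) * (1/(2*(G.degree x:ℝ))) = 1/2 := by field_simp
    rw [this]; norm_num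

lemma deg_mul_rowSum (x : V) :
    (G.degree x : ℝ) * ∑ y, walkP G x y = (G.degree x : ℝ) := by
  rw [rowSum]
  rcases Nat.eq_zero_or_pos (G.degree x) with h | h
  · simp [h]
  · have h0 : (0:ℝ) < G.degree x := by exact_mod_cast h
    have : (G.degree x : ℝ) * (1/(2*(G.degree x:ℝ))) = 1/2 := by field_simp
    rw [this]; ring


lemma SF_le_one (T : ℕ) (x : V) : SF G T x ≤ 1 := by
  induction T generalizing x with
  | zero => rw [SF_zero]
  | succ T ih =>
    rw [SF_succ]
    calc ∑ y, walkP G x y * SF G T y ≤ ∑ y, walkP G x y * 1 := by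
          apply Finset.sum_le_sum
          intro y _
          exact mul_le_mul_of_nonneg_left (ih y) (walkP_nonneg G x y)
      _ ≤ 1 := by simpa using rowSum_le_one G x

lemma stF_le_one (A : Finset V) (T : ℕ) (x : V) : stF G A T x ≤ 1 :=
  le_trans (stF_le_SF G A T x) (SF_le_one G T x)


lemma escProb_eq (x : V) (T : ℕ) (A : Finset V) :
    escProb G x T A = SF G T x - stF G A T x := by
  unfold escProb SF stF
  rw [← Finset.sum_sub_distrib]
  apply Finset.sum_congr rfl
  intro v _
  show (if v 0 = x ∧ ∃ j : Fin (T+1), v j ∉ A then wgt G T v else 0) = _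
  by_cases h0 : v 0 = x
  · by_cases hall : ∀ j, v j ∈ A
    · have hne : ¬ ∃ j : Fin (T+1), v j ∉ A := by push_neg; exact hall
      simp [h0, hall, hne]
    · have hex : ∃ j : Fin (T+1), v j ∉ A := by push_neg at hall; exact hall
      simp [h0, hall, hex]
  · simp [h0]

lemma escProb_nonneg (x : V) (T : ℕ) (A : Finset V) : 0 ≤ escProb G x T A :=
  Finset.sum_nonneg fun v _ => by split_ifs; exacts [wgt_nonneg G T v, le_refl 0]

lemma escProb_le (x : V) (T : ℕ) (A : Finset V) :
    escProb G x T A ≤ 1 - stF G A T x := by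
  rw [escProb_eq]
  have := SF_le_one G T x
  linarith

/-- cross-degree -/
def cross (A : Finset V) (y : V) : ℝ := ((Aᶜ.filter (G.Adj y)).card : ℝ)

lemma cross_nonneg (A : Finset V) (y : V) : 0 ≤ cross G A y := Nat.cast_nonneg _

lemma deg_mul_sum_walkP (A : Finset V) {y : V} (hy : y ∈ A) :
    (G.degree y : ℝ) * ∑ x ∈ A, walkP G y x = (G.degree y : ℝ) - cross G A y / 2 := by
  have hsplit : (∑ x ∈ A, walkP G y x) + (∑ x ∈ Aᶜ, walkP G y x) = ∑ x, walkP G y x :=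
    Finset.sum_add_sum_compl A _
  have h1 : (G.degree y : ℝ) * ∑ x ∈ Aᶜ, walkP G y x = cross G A y / 2 := by
    rw [Finset.mul_sum]
    have : ∀ x ∈ Aᶜ, (G.degree y : ℝ) * walkP G y x = if G.Adj y x then 1/2 else 0 := by
      intro x hx
      apply deg_walkP_ne
      intro h
      exact (Finset.mem_compl.mp hx) (h ▸ hy)
    rw [Finset.sum_congr rfl this, Finset.sum_ite, Finset.sum_const, Finset.sum_const]
    simp [cross]
    ring
  have h2 := deg_mul_rowSum G y
  have h3 : (G.degree y : ℝ) * ((∑ x ∈ A, walkP G y x) + (∑ x ∈ Aᶜ, walkP G y x))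
      = (G.degree y : ℝ) := by rw [hsplit]; exact h2
  nlinarith [h3, h1]

/-- Key induction: the weighted mass not retained is at most T·∂(A)/2. -/
lemma key (A : Finset V) (T : ℕ) :
    ∑ x ∈ A, (G.degree x : ℝ) * (1 - stF G A T x) ≤ T * bdry G A / 2 := by
  induction T with
  | zero =>
    apply le_of_eq
    rw [Finset.sum_eq_zero]
    · simp
    · intro x hx
      rw [stF_zero, if_pos hx]
      ring
  | succ T ih =>
    have hstep : ∑ y ∈ A, (G.degree y : ℝ) * stF G A T y - bdry G A / 2
        ≤ ∑ x ∈ A, (G.degree x : ℝ) * stF G A (T+1) x := by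
      have hrec : ∑ x ∈ A, (G.degree x : ℝ) * stF G A (T+1) x
          = ∑ y ∈ A, ((G.degree y : ℝ) - cross G A y / 2) * stF G A T y := by
        calc ∑ x ∈ A, (G.degree x : ℝ) * stF G A (T+1) x
            = ∑ x ∈ A, ∑ y, (G.degree y : ℝ) * walkP G y x * stF G A T y := by
              apply Finset.sum_congr rfl
              intro x hx
              rw [stF_succ, if_pos hx, Finset.mul_sum]
              apply Finset.sum_congr rfl
              intro y _
              rw [← mul_assoc, reversible G x y]
          _ = ∑ y, ∑ x ∈ A, (G.degree y : ℝ) * walkP G y x * stF G A T y :=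
              Finset.sum_comm
          _ = ∑ y, ((G.degree y : ℝ) * ∑ x ∈ A, walkP G y x) * stF G A T y := by
              apply Finset.sum_congr rfl
              intro y _
              rw [← Finset.sum_mul, Finset.mul_sum]
          _ = ∑ y ∈ A, ((G.degree y : ℝ) * ∑ x ∈ A, walkP G y x) * stF G A T y := by
              symm
              apply Finset.sum_subset (Finset.subset_univ A)
              intro y _ hy
              rw [stF_eq_zero G A T hy, mul_zero]
          _ = ∑ y ∈ A, ((G.degree y : ℝ) - cross G A y / 2) * stF G A T y := by
              apply Finset.sum_congr rfl
              intro y hy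
              rw [deg_mul_sum_walkP G A hy]
      rw [hrec]
      have hpt : ∀ y ∈ A, (G.degree y : ℝ) * stF G A T y - cross G A y / 2
          ≤ ((G.degree y : ℝ) - cross G A y / 2) * stF G A T y := by
        intro y _
        have h1 := stF_le_one G A T y
        have h2 := cross_nonneg G A y
        nlinarith
      have hb : bdry G A = ∑ y ∈ A, cross G A y := rfl
      calc ∑ y ∈ A, (G.degree y : ℝ) * stF G A T y - bdry G A / 2
          = ∑ y ∈ A, ((G.degree y : ℝ) * stF G A T y - cross G A y / 2) := by
            rw [Finset.sum_sub_distrib, hb, Finset.sum_div]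
        _ ≤ _ := Finset.sum_le_sum hpt
    have hexp : ∑ x ∈ A, (G.degree x : ℝ) * (1 - stF G A (T+1) x)
        = ∑ x ∈ A, (G.degree x : ℝ) - ∑ x ∈ A, (G.degree x : ℝ) * stF G A (T+1) x := by
      rw [← Finset.sum_sub_distrib]
      apply Finset.sum_congr rfl
      intro x _
      ring
    have hexp2 : ∑ x ∈ A, (G.degree x : ℝ) * (1 - stF G A T x)
        = ∑ x ∈ A, (G.degree x : ℝ) - ∑ x ∈ A, (G.degree x : ℝ) * stF G A T x := by
      rw [← Finset.sum_sub_distrib]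
      apply Finset.sum_congr rfl
      intro x _
      ring
    rw [hexp]
    rw [hexp2] at ih
    push_cast
    nlinarith [hstep, ih]

lemma escSum (A : Finset V) (T : ℕ) :
    ∑ x ∈ A, (G.degree x : ℝ) * escProb G x T A ≤ T * bdry G A / 2 := by
  refine le_trans (Finset.sum_le_sum ?_) (key G A T)
  intro x _
  exact mul_le_mul_of_nonneg_left (escProb_le G x T A) (by positivity)

end Aux

/-- Proposition 4: for a nonempty set `A` and `T ≥ 0`, the subset
`A_T = {x ∈ A : esc(x,T,A) ≤ T φ(A)}` satisfies `μ(A_T) ≥ μ(A)/2`. -/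
theorem statement12 (G : SimpleGraph V) [DecidableRel G.Adj]
    (A : Finset V) (hA : A.Nonempty) (T : ℕ) :
    vol G A / 2 ≤ vol G (A.filter fun x => escProb G x T A ≤ T * phiCond G A) := by
  classical
  have hsum : ∑ x ∈ A, (G.degree x : ℝ) * escProb G x T A ≤ T * bdry G A / 2 :=
    Aux.escSum G A T
  have hvolAt_nonneg : (0:ℝ) ≤ vol G (A.filter fun x => escProb G x T A ≤ T * phiCond G A) :=
    Finset.sum_nonneg fun x _ => Nat.cast_nonneg _
  have hvolA_nonneg : (0:ℝ) ≤ vol G A := Finset.sum_nonneg fun x _ => Nat.cast_nonneg _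
  have hbdry_nonneg : (0:ℝ) ≤ bdry G A := Finset.sum_nonneg fun x _ => Nat.cast_nonneg _
  set B : Finset V := A.filter (fun x => ¬ (escProb G x T A ≤ T * phiCond G A)) with hB
  have hvolsplit : vol G (A.filter fun x => escProb G x T A ≤ T * phiCond G A) + vol G B
      = vol G A := Finset.sum_filter_add_sum_filter_not A _ _
  have hBle : ∑ x ∈ B, (G.degree x : ℝ) * escProb G x T A ≤ (T:ℝ) * bdry G A / 2 := by
    refine le_trans (Finset.sum_le_sum_of_subset_of_nonneg (Finset.filter_subset _ _) ?_) hsum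
    intro x _ _
    exact mul_nonneg (Nat.cast_nonneg _) (Aux.escProb_nonneg G x T A)
  by_cases hv : vol G A = 0
  · rw [hv]
    norm_num
    exact hvolAt_nonneg
  · have hvpos : 0 < vol G A := lt_of_le_of_ne hvolA_nonneg (Ne.symm hv)
    suffices hBbound : vol G B ≤ vol G A / 2 by linarith
    have hBsum : vol G B = ∑ x ∈ B, (G.degree x : ℝ) := rfl
    by_cases hTb : (T:ℝ) * bdry G A = 0
    · have hphi0 : (T:ℝ) * phiCond G A = 0 := by
        unfold phiCond
        rw [mul_div_assoc', hTb, zero_div]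
      have hsum0 : ∑ x ∈ A, (G.degree x : ℝ) * escProb G x T A = 0 := by
        have h1 : (0:ℝ) ≤ ∑ x ∈ A, (G.degree x : ℝ) * escProb G x T A :=
          Finset.sum_nonneg fun x _ =>
            mul_nonneg (Nat.cast_nonneg _) (Aux.escProb_nonneg G x T A)
        have h2 : (T:ℝ) * bdry G A / 2 = 0 := by rw [hTb]; norm_num
        linarith [hsum, h2.symm ▸ hsum]
      have hall : ∀ x ∈ A, (G.degree x : ℝ) * escProb G x T A = 0 :=
        (Finset.sum_eq_zero_iff_of_nonneg fun x _ =>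
          mul_nonneg (Nat.cast_nonneg _) (Aux.escProb_nonneg G x T A)).mp hsum0
      have hB0 : vol G B = 0 := by
        rw [hBsum]
        apply Finset.sum_eq_zero
        intro x hx
        obtain ⟨hxA, hgt⟩ := Finset.mem_filter.mp hx
        rw [hphi0] at hgt
        push_neg at hgt
        rcases mul_eq_zero.mp (hall x hxA) with h | h
        · exact h
        · exact absurd h (ne_of_gt hgt)
      rw [hB0]
      positivity
    · have hTbpos : 0 < (T:ℝ) * bdry G A :=
        lt_of_le_of_ne (mul_nonneg (Nat.cast_nonneg _) hbdry_nonneg) (Ne.symm hTb)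
      have hphipos : 0 < (T:ℝ) * phiCond G A := by
        unfold phiCond
        rw [mul_div_assoc']
        exact div_pos hTbpos hvpos
      have hmark : vol G B * ((T:ℝ) * phiCond G A) ≤ (T:ℝ) * bdry G A / 2 := by
        calc vol G B * ((T:ℝ) * phiCond G A)
            = ∑ x ∈ B, (G.degree x : ℝ) * ((T:ℝ) * phiCond G A) := by
              rw [hBsum, Finset.sum_mul]
          _ ≤ ∑ x ∈ B, (G.degree x : ℝ) * escProb G x T A := by
              apply Finset.sum_le_sum
              intro x hx
              obtain ⟨hxA, hgt⟩ := Finset.mem_filter.mp hx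
              push_neg at hgt
              exact mul_le_mul_of_nonneg_left (le_of_lt hgt) (Nat.cast_nonneg _)
          _ ≤ (T:ℝ) * bdry G A / 2 := hBle
      have hident : (T:ℝ) * bdry G A / 2 = ((T:ℝ) * phiCond G A) * (vol G A / 2) := by
        unfold phiCond
        field_simp
      rw [hident] at hmark
      have := (mul_le_mul_iff_of_pos_right hphipos).mp (by linarith [hmark] : vol G B * ((T:ℝ) * phiCond G A) ≤ (vol G A / 2) * ((T:ℝ) * phiCond G A))
      exact this
end
end
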